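/- Let 𝒯 = (Σ, ℰ) be a 𝒱-enriched 𝒮-sorted equational theory with underlying classical 𝒮-sorted equational theory |𝒯| = (|Σ|, |ℰ|), and let X be an 𝒮-sorted object of 𝒱. Then the carrier U^𝒯 F^𝒯 X of the free 𝒯-algebra on X is the infimum, in the fibre of 𝒱^𝒮 over the 𝒮-sorted set Term_{|Σ|}(|X|)/∼^{|ℰ|} (the carrier of the free |𝒯|-algebra on |X|), of all elements of that fibre that are 𝒯-compatible with X. -/

import Mathlib

universe u

/-- A topological construct over `Set`: an amnestic concrete category over types,
presented by a class of structures on each type together with an admissibility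
predicate on functions, in which every structured source has an initial lift and
every structured sink has a final lift (index types in `Type (u+1)` suffice for
all the "large" sources/sinks we consider). -/
structure TopConstruct : Type (u + 2) where
  Str : Type u → Type (u + 1)
  Adm : ∀ {X Y : Type u}, Str X → Str Y → (X → Y) → Prop
  adm_id : ∀ {X : Type u} (s : Str X), Adm s s id
  adm_comp : ∀ {X Y Z : Type u} {s : Str X} {t : Str Y} {r : Str Z} {f : X → Y} {g : Y → Z},
    Adm s t f → Adm t r g → Adm s r (g ∘ f)
  amnestic : ∀ {X : Type u} (s t : Str X), Adm s t id → Adm t s id → s = t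
  iLift : ∀ {X : Type u} {I : Type (u + 1)} (T : I → Type u) (t : ∀ i, Str (T i))
    (f : ∀ i, X → T i), Str X
  iLift_adm : ∀ {X : Type u} {I : Type (u + 1)} (T : I → Type u) (t : ∀ i, Str (T i))
    (f : ∀ i, X → T i) (i : I), Adm (iLift T t f) (t i) (f i)
  iLift_initial : ∀ {X : Type u} {I : Type (u + 1)} (T : I → Type u) (t : ∀ i, Str (T i))
    (f : ∀ i, X → T i) {W : Type u} (w : Str W) (g : W → X),
    (∀ i, Adm w (t i) (fun x => f i (g x))) → Adm w (iLift T t f) g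
  fLift : ∀ {X : Type u} {I : Type (u + 1)} (T : I → Type u) (t : ∀ i, Str (T i))
    (f : ∀ i, T i → X), Str X
  fLift_adm : ∀ {X : Type u} {I : Type (u + 1)} (T : I → Type u) (t : ∀ i, Str (T i))
    (f : ∀ i, T i → X) (i : I), Adm (t i) (fLift T t f) (f i)
  fLift_final : ∀ {X : Type u} {I : Type (u + 1)} (T : I → Type u) (t : ∀ i, Str (T i))
    (f : ∀ i, T i → X) {W : Type u} (w : Str W) (g : X → W),
    (∀ i, Adm (t i) w (fun x => g (f i x))) → Adm (fLift T t f) w g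

namespace TopConstruct

variable (V : TopConstruct.{u})

/-- The objects of the topological category `V`. -/
def Obj : Type (u + 1) := Σ X : Type u, V.Str X

/-- The fibre (partial) order over a fixed underlying set. -/
def fibLe {X : Type u} (s t : V.Str X) : Prop := V.Adm s t id

/-- Infima in the fibres (initial lift of a structured source of identities). -/
def fibInf {X : Type u} {I : Type (u + 1)} (s : I → V.Str X) : V.Str X :=
  V.iLift (fun _ => X) s fun _ => id

/-- Suprema in the fibres (final lift of a structured sink of identities). -/
def fibSup {X : Type u} {I : Type (u + 1)} (s : I → V.Str X) : V.Str X :=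
  V.fLift (fun _ => X) s fun _ => id

/-- Binary suprema in the fibres. -/
def fibSup2 {X : Type u} (s t : V.Str X) : V.Str X :=
  V.fibSup fun b : ULift.{u + 1} Bool => bif b.down then s else t

/-- Initial lift of a single structured map. -/
def iLift1 {X Y : Type u} (t : V.Str Y) (f : X → Y) : V.Str X :=
  V.iLift (I := PUnit.{u + 2}) (fun _ => Y) (fun _ => t) fun _ => f

/-- Final lift of a single structured map. -/
def fLift1 {X Y : Type u} (t : V.Str X) (f : X → Y) : V.Str Y :=
  V.fLift (I := PUnit.{u + 2}) (fun _ => X) (fun _ => t) fun _ => f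

/-- The indiscrete structure (top of the fibre). -/
def indisc (X : Type u) : V.Str X :=
  V.iLift (I := PEmpty.{u + 2}) (fun e => e.elim) (fun e => e.elim) fun e => e.elim

/-- The discrete structure (bottom of the fibre). -/
def disc (X : Type u) : V.Str X :=
  V.fLift (I := PEmpty.{u + 2}) (fun e => e.elim) (fun e => e.elim) fun e => e.elim

/-- The product structure on a finitely-indexed (or any `Type 0`-indexed) family. -/
def piStrF {I : Type} {T : I → Type u} (t : ∀ i, V.Str (T i)) : V.Str (∀ i, T i) :=
  V.iLift (I := ULift.{u + 1} I) (fun i => T i.down) (fun i => t i.down) fun i g => g i.down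

/-- The product structure on a `Type u`-indexed family. -/
def piStrU {I : Type u} {T : I → Type u} (t : ∀ i, V.Str (T i)) : V.Str (∀ i, T i) :=
  V.iLift (I := ULift.{u + 1} I) (fun i => T i.down) (fun i => t i.down) fun i g => g i.down

/-- The binary (cartesian) product structure. -/
def prodStr {X Y : Type u} (s : V.Str X) (t : V.Str Y) : V.Str (X × Y) :=
  V.iLift (I := ULift.{u + 1} Bool) (fun b => Bool.rec Y X b.down)
    (fun b => Bool.rec (motive := fun c => V.Str (Bool.rec Y X c)) t s b.down)
    (fun b => Bool.rec (motive := fun c => X × Y → Bool.rec Y X c) Prod.snd Prod.fst b.down)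

end TopConstruct

/-- Cartesian closedness of a topological construct, witnessed concretely:
each hom-set carries an exponential structure for which admissibility of a map
into the exponential is equivalent to admissibility of its uncurrying. -/
structure CartesianClosed (V : TopConstruct.{u}) : Type (u + 1) where
  exp : ∀ {X Y : Type u} (s : V.Str X) (t : V.Str Y), V.Str {f : X → Y // V.Adm s t f}
  adm_curry_iff : ∀ {X Y Z : Type u} (s : V.Str X) (t : V.Str Y) (c : V.Str Z)
    (g : Z → {f : X → Y // V.Adm s t f}),
    V.Adm c (exp s t) g ↔ V.Adm (V.prodStr c s) t fun p => (g p.1).1 p.2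

/-- A symmetric monoidal structure on a topological construct `V` for which the
forgetful functor to `Set` is strict symmetric monoidal with respect to the
cartesian structure on `Set`. -/
structure MonStr (V : TopConstruct.{u}) : Type (u + 1) where
  tens : ∀ {X Y : Type u}, V.Str X → V.Str Y → V.Str (X × Y)
  unitStr : V.Str PUnit.{u + 1}
  tens_adm : ∀ {X X' Y Y' : Type u} {s : V.Str X} {s' : V.Str X'} {t : V.Str Y} {t' : V.Str Y'}
    {f : X → X'} {g : Y → Y'}, V.Adm s s' f → V.Adm t t' g →
    V.Adm (tens s t) (tens s' t') (Prod.map f g)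
  swap_adm : ∀ {X Y : Type u} (s : V.Str X) (t : V.Str Y), V.Adm (tens s t) (tens t s) Prod.swap
  assoc_adm : ∀ {X Y Z : Type u} (s : V.Str X) (t : V.Str Y) (r : V.Str Z),
    V.Adm (tens (tens s t) r) (tens s (tens t r)) fun p => (p.1.1, (p.1.2, p.2))
  assoc_inv_adm : ∀ {X Y Z : Type u} (s : V.Str X) (t : V.Str Y) (r : V.Str Z),
    V.Adm (tens s (tens t r)) (tens (tens s t) r) fun p => ((p.1, p.2.1), p.2.2)
  lunit_adm : ∀ {X : Type u} (s : V.Str X), V.Adm (tens unitStr s) s Prod.snd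
  lunit_inv_adm : ∀ {X : Type u} (s : V.Str X), V.Adm s (tens unitStr s) fun x => (PUnit.unit, x)
  runit_adm : ∀ {X : Type u} (s : V.Str X), V.Adm (tens s unitStr) s Prod.fst
  runit_inv_adm : ∀ {X : Type u} (s : V.Str X), V.Adm s (tens s unitStr) fun x => (x, PUnit.unit)

/-- The statement that the symmetric monoidal structure `M` is the cartesian one. -/
def MonStr.IsCartesian {V : TopConstruct.{u}} (M : MonStr V) : Prop :=
  (∀ {X Y : Type u} (s : V.Str X) (t : V.Str Y), M.tens s t = V.prodStr s t) ∧
    M.unitStr = V.indisc PUnit.{u + 1}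
universe v

/-- A classical `S`-sorted signature. -/
structure ClassSig (S : Type u) : Type (u + 1) where
  Op : Type u
  ar : Op → List S
  out : Op → S

/-- A classical `S`-sorted algebra (in `Set`) for a classical signature. -/
structure ClassAlg {S : Type u} (Sg : ClassSig S) : Type (u + 1) where
  car : S → Type u
  op : ∀ σ : Sg.Op, (∀ i : Fin (Sg.ar σ).length, car ((Sg.ar σ).get i)) → car (Sg.out σ)

/-- A morphism of classical algebras. -/
def IsClsHom {S : Type u} {Sg : ClassSig S} (A B : ClassAlg Sg)
    (h : ∀ s, A.car s → B.car s) : Prop :=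
  ∀ (σ : Sg.Op) (ts : ∀ i : Fin (Sg.ar σ).length, A.car ((Sg.ar σ).get i)),
    h _ (A.op σ ts) = B.op σ fun i => h _ (ts i)

/-- Ground terms over a classical signature with constants from `X`. -/
inductive Tm {S : Type u} (Sg : ClassSig S) (X : S → Type v) : S → Type (max u v)
  | var {s : S} : X s → Tm Sg X s
  | app (σ : Sg.Op) (ts : ∀ i : Fin (Sg.ar σ).length, Tm Sg X ((Sg.ar σ).get i)) :
      Tm Sg X (Sg.out σ)

/-- The term algebra (the free classical algebra) on an `S`-sorted set. -/
def termAlg {S : Type u} (Sg : ClassSig S) (X : S → Type u) : ClassAlg Sg :=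
  ⟨Tm Sg X, fun σ ts => .app σ ts⟩

/-- The unique extension of `f` to a homomorphism out of the term algebra
(the adjoint transpose `f^♯`). -/
def Tm.extend {S : Type u} {Sg : ClassSig S} {X : S → Type v} (B : ClassAlg Sg)
    (f : ∀ s, X s → B.car s) : ∀ {s : S}, Tm Sg X s → B.car s
  | _, .var x => f _ x
  | _, .app σ ts => B.op σ fun i => Tm.extend B f (ts i)

/-- Variables of a context: positions of the context list of the given sort. -/
def CtxVar {S : Type u} (Γ : List S) (s : S) : Type := {i : Fin Γ.length // Γ.get i = s}

/-- A syntactic equation in context over a classical signature. -/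
structure SynEq {S : Type u} (Sg : ClassSig S) : Type u where
  ctx : List S
  sort : S
  lhs : Tm Sg (CtxVar ctx) sort
  rhs : Tm Sg (CtxVar ctx) sort

/-- Interpretation of a term in context in a classical algebra at a valuation. -/
def ctxInterp {S : Type u} {Sg : ClassSig S} (B : ClassAlg Sg) {Γ : List S} {s : S}
    (t : Tm Sg (CtxVar Γ) s) (as : ∀ i : Fin Γ.length, B.car (Γ.get i)) : B.car s :=
  Tm.extend (X := CtxVar Γ) B (fun _ x => x.2 ▸ as x.1) t

/-- Satisfaction of a syntactic equation in context by a classical algebra. -/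
def ClsSat {S : Type u} {Sg : ClassSig S} (B : ClassAlg Sg) (e : SynEq Sg) : Prop :=
  ∀ as : ∀ i : Fin e.ctx.length, B.car (e.ctx.get i),
    ctxInterp B e.lhs as = ctxInterp B e.rhs as

/-- A congruence on a classical algebra. -/
def IsClsCong {S : Type u} {Sg : ClassSig S} (B : ClassAlg Sg)
    (r : ∀ s, B.car s → B.car s → Prop) : Prop :=
  (∀ s, Equivalence (r s)) ∧
    ∀ (σ : Sg.Op) (ts us : ∀ i : Fin (Sg.ar σ).length, B.car ((Sg.ar σ).get i)),
      (∀ i, r _ (ts i) (us i)) → r _ (B.op σ ts) (B.op σ us)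

/-- The congruence on a classical algebra generated by a set of syntactic
equations in context: the smallest congruence identifying the interpretations
of the two sides of each equation at all valuations. -/
def congGen {S : Type u} {Sg : ClassSig S} (B : ClassAlg Sg) (E : Set (SynEq Sg)) :
    ∀ s, B.car s → B.car s → Prop := fun s a b =>
  ∀ r : ∀ s, B.car s → B.car s → Prop, IsClsCong B r →
    (∀ e ∈ E, ∀ as, r e.sort (ctxInterp B e.lhs as) (ctxInterp B e.rhs as)) → r s a b

/-- A `V`-enriched `S`-sorted signature: operation symbols with input sorts,
an output sort and a parameter object of `V`. -/
structure VSig (V : TopConstruct.{u}) (S : Type u) : Type (u + 1) where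
  Op : Type u
  ar : Op → List S
  out : Op → S
  parC : Op → Type u
  parS : ∀ σ, V.Str (parC σ)

/-- The underlying classical `S`-sorted signature `|Σ|` of a `V`-enriched one:
one operation symbol `σ_p` for every `σ` and every point `p` of its parameter. -/
def VSig.toClass {V : TopConstruct.{u}} {S : Type u} (Sg : VSig V S) : ClassSig S where
  Op := Σ σ : Sg.Op, Sg.parC σ
  ar := fun σ => Sg.ar σ.1
  out := fun σ => Sg.out σ.1

/-- A `Σ`-algebra for a `V`-enriched `S`-sorted signature (relative to a
symmetric monoidal structure `M` on `V`): an `S`-sorted object of `V` equipped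
with an admissible operation `P ⊗ (A_{S₁} × ⋯ × A_{Sₙ}) → A_S` for each `σ`. -/
structure VAlg (V : TopConstruct.{u}) (M : MonStr V) {S : Type u} (Sg : VSig V S) :
    Type (u + 1) where
  car : S → Type u
  str : ∀ s, V.Str (car s)
  op : ∀ σ : Sg.Op,
    Sg.parC σ × (∀ i : Fin (Sg.ar σ).length, car ((Sg.ar σ).get i)) → car (Sg.out σ)
  op_adm : ∀ σ : Sg.Op,
    V.Adm (M.tens (Sg.parS σ) (V.piStrF fun i => str ((Sg.ar σ).get i))) (str (Sg.out σ)) (op σ)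

/-- The underlying classical `|Σ|`-algebra of a `Σ`-algebra. -/
def VAlg.cls {V : TopConstruct.{u}} {M : MonStr V} {S : Type u} {Sg : VSig V S}
    (A : VAlg V M Sg) : ClassAlg Sg.toClass :=
  ⟨A.car, fun σ ts => A.op σ.1 (σ.2, ts)⟩

/-- A morphism of `Σ`-algebras: an `S`-sorted admissible family commuting with
all the operations. -/
def IsVHom {V : TopConstruct.{u}} {M : MonStr V} {S : Type u} {Sg : VSig V S}
    (A B : VAlg V M Sg) (h : ∀ s, A.car s → B.car s) : Prop :=
  (∀ s, V.Adm (A.str s) (B.str s) (h s)) ∧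
    ∀ (σ : Sg.Op) (p : Sg.parC σ) (ts : ∀ i : Fin (Sg.ar σ).length, A.car ((Sg.ar σ).get i)),
      h _ (A.op σ (p, ts)) = B.op σ (p, fun i => h _ (ts i))
/-- The components of a candidate algebraic `Σ`-operation with input sorts
`ins`, output sort `o` and parameter carrier `P`. -/
def OpFam (V : TopConstruct.{u}) (M : MonStr V) {S : Type u} (Sg : VSig V S)
    (ins : List S) (o : S) (P : Type u) : Type (u + 1) :=
  ∀ A : VAlg V M Sg, P × (∀ i : Fin ins.length, A.car (ins.get i)) → A.car o

/-- Admissibility of all components of a candidate algebraic `Σ`-operation. -/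
def OpAdm {V : TopConstruct.{u}} {M : MonStr V} {S : Type u} {Sg : VSig V S}
    {ins : List S} {o : S} {P : Type u} (pS : V.Str P) (ω : OpFam V M Sg ins o P) : Prop :=
  ∀ A : VAlg V M Sg,
    V.Adm (M.tens pS (V.piStrF fun i => A.str (ins.get i))) (A.str o) (ω A)

/-- Naturality of a candidate algebraic `Σ`-operation. -/
def OpNat {V : TopConstruct.{u}} {M : MonStr V} {S : Type u} {Sg : VSig V S}
    {ins : List S} {o : S} {P : Type u} (ω : OpFam V M Sg ins o P) : Prop :=
  ∀ (A B : VAlg V M Sg) (h : ∀ s, A.car s → B.car s), IsVHom A B h →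
    ∀ (p : P) (ts : ∀ i : Fin ins.length, A.car (ins.get i)),
      h o (ω A (p, ts)) = ω B (p, fun i => h _ (ts i))

/-- An algebraic `Σ`-equation: a pair of algebraic `Σ`-operations
(natural transformations `P ⊗ U^{S̄} ⟹ U^S`) of the same type. -/
structure AlgEq (V : TopConstruct.{u}) (M : MonStr V) {S : Type u} (Sg : VSig V S) :
    Type (u + 1) where
  ins : List S
  out : S
  parC : Type u
  parS : V.Str parC
  lhs : OpFam V M Sg ins out parC
  rhs : OpFam V M Sg ins out parC
  lhs_adm : OpAdm parS lhs
  rhs_adm : OpAdm parS rhs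
  lhs_nat : OpNat lhs
  rhs_nat : OpNat rhs

/-- Satisfaction of an algebraic `Σ`-equation by a `Σ`-algebra. -/
def VSat {V : TopConstruct.{u}} {M : MonStr V} {S : Type u} {Sg : VSig V S}
    (A : VAlg V M Sg) (e : AlgEq V M Sg) : Prop :=
  e.lhs A = e.rhs A

/-- The indiscrete `Σ`-algebra determined by a classical `|Σ|`-algebra. -/
def indiscAlg (V : TopConstruct.{u}) (M : MonStr V) {S : Type u} (Sg : VSig V S)
    (B : ClassAlg Sg.toClass) : VAlg V M Sg where
  car := B.car
  str := fun s => V.indisc (B.car s)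
  op := fun σ pts => B.op ⟨σ, pts.1⟩ pts.2
  op_adm := fun σ => V.iLift_initial _ _ _ _ _ fun i => i.elim
/-- The carrier `Term_{|Σ|}(|X|)/∼^{|ℰ|}` of the free `|𝒯|`-algebra on `|X|`:
the quotient of the `𝒮`-sorted set of ground `|Σ|`-terms with constants from
`|X|` by the `|Σ|`-congruence on the term algebra generated by `|ℰ| = E'`. -/
def QCar (V : TopConstruct.{u}) {S : Type u} (Sg : VSig V S)
    (E' : Set (SynEq Sg.toClass)) (X : S → V.Obj) (s : S) : Type u :=
  Quot (congGen (termAlg Sg.toClass fun s => (X s).1) E' s)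
/-- `𝒯`-compatibility with `X` of an element `B` of the fibre of `𝒱^𝒮` over
`Term_{|Σ|}(|X|)/∼^{|ℰ|}`: (1) the `𝒮`-sorted unit function lifts to a
`𝒱^𝒮`-morphism `X → B`, and (2) for each `σ ∈ Σ` of type `((S₁,…,Sₙ), S, P)` the
function `(p, [t₁],…,[tₙ]) ↦ [σ_p(t₁,…,tₙ)]` lifts to a `𝒱`-morphism
`P ⊗ (B_{S₁} × ⋯ × B_{Sₙ}) → B_S`. -/
def TCompat (V : TopConstruct.{u}) (M : MonStr V) {S : Type u} (Sg : VSig V S)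
    (E' : Set (SynEq Sg.toClass)) (X : S → V.Obj)
    (B : ∀ s, V.Str (QCar V Sg E' X s)) : Prop :=
  (∀ s, V.Adm (X s).2 (B s) fun x => Quot.mk _ (Tm.var x)) ∧
    ∀ σ : Sg.Op,
      ∃ g : Sg.parC σ × (∀ i : Fin (Sg.ar σ).length, QCar V Sg E' X ((Sg.ar σ).get i)) →
          QCar V Sg E' X (Sg.out σ),
        (∀ (p : Sg.parC σ) ts,
          g (p, fun i => Quot.mk _ (ts i)) =
            Quot.mk _ (Tm.app (Sg := Sg.toClass) ⟨σ, p⟩ ts)) ∧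
        V.Adm (M.tens (Sg.parS σ) (V.piStrF fun i => B ((Sg.ar σ).get i)))
          (B (Sg.out σ)) g

/-- The carrier `U^𝒯 F^𝒯 X` of the free `𝒯`-algebra on `X` is the
infimum, in the fibre of `𝒱^𝒮` over the carrier `Term_{|Σ|}(|X|)/∼^{|ℰ|}` of the
free `|𝒯|`-algebra on `|X|`, of all the elements of that fibre that are
`𝒯`-compatible with `X`.  (Here `(ωT, qop)` is the free `𝒯`-algebra on `X`,
hypothesized through its characterizing properties.) -/
theorem statement13 (V : TopConstruct.{u}) (M : MonStr V) {S : Type u} (Sg : VSig V S)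
    (E : Set (AlgEq V M Sg)) (E' : Set (SynEq Sg.toClass))
    (hE' : ∀ A : VAlg V M Sg, (∀ e ∈ E, VSat A e) ↔ ∀ e' ∈ E', ClsSat A.cls e')
    (X : S → V.Obj)
    (ωT : ∀ s, V.Str (QCar V Sg E' X s))
    (qop : ∀ σ : Sg.Op,
      Sg.parC σ × (∀ i : Fin (Sg.ar σ).length, QCar V Sg E' X ((Sg.ar σ).get i)) →
        QCar V Sg E' X (Sg.out σ))
    -- the underlying classical algebra of `F^𝒯 X` is the free `|𝒯|`-algebra:
    (hq : ∀ (σ : Sg.Op) (p : Sg.parC σ) ts,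
      qop σ (p, fun i => Quot.mk _ (ts i)) =
        Quot.mk _ (Tm.app (Sg := Sg.toClass) ⟨σ, p⟩ ts))
    -- the operations of `F^𝒯 X` are admissible:
    (hadm : ∀ σ : Sg.Op,
      V.Adm (M.tens (Sg.parS σ) (V.piStrF fun i => ωT ((Sg.ar σ).get i)))
        (ωT (Sg.out σ)) (qop σ))
    -- the unit of `F^𝒯 X` is admissible:
    (hη : ∀ s, V.Adm (X s).2 (ωT s) fun x => Quot.mk _ (Tm.var x))
    -- `F^𝒯 X` is a `𝒯`-algebra:
    (hT : ∀ e' ∈ E',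
      ClsSat (⟨fun s => QCar V Sg E' X s, fun σ ts => qop σ.1 (σ.2, ts)⟩ :
        ClassAlg Sg.toClass) e')
    -- `F^𝒯 X` is free on `X` among `𝒯`-algebras:
    (hfree : ∀ A : VAlg V M Sg, (∀ e ∈ E, VSat A e) →
      ∀ f : ∀ s, (X s).1 → A.car s, (∀ s, V.Adm (X s).2 (A.str s) (f s)) →
      ∃! h : ∀ s, QCar V Sg E' X s → A.car s,
        (∀ s, V.Adm (ωT s) (A.str s) (h s)) ∧
        (∀ (σ : Sg.Op) (p : Sg.parC σ) ts,
          h _ (qop σ (p, ts)) = A.op σ (p, fun i => h _ (ts i))) ∧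
        ∀ s x, h s (Quot.mk _ (Tm.var x)) = f s x) :
    ∀ s, ωT s =
      V.fibInf (I := {B : ∀ s, V.Str (QCar V Sg E' X s) // TCompat V M Sg E' X B})
        fun B => B.1 s := by
  classical
  have hωT : TCompat V M Sg E' X ωT := ⟨hη, fun σ => ⟨qop σ, hq σ, hadm σ⟩⟩
  have hmin : ∀ (B : ∀ s, V.Str (QCar V Sg E' X s)), TCompat V M Sg E' X B →
      ∀ s', V.Adm (ωT s') (B s') id := by
    intro B hB s'
    choose g hg1 hg2 using hB.2
    have hgq : ∀ σ, g σ = qop σ := by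
      intro σ
      funext pq
      obtain ⟨p, qs⟩ := pq
      have hrep : ∀ i, ∃ t, Quot.mk _ t = qs i := fun i => Quot.exists_rep (qs i)
      choose ts hts using hrep
      have hqs : qs = fun i => Quot.mk _ (ts i) := funext fun i => (hts i).symm
      rw [hqs]; exact (hg1 σ p ts).trans (hq σ p ts).symm
    have hopadm : ∀ σ : Sg.Op,
        V.Adm (M.tens (Sg.parS σ) (V.piStrF fun i => B ((Sg.ar σ).get i)))
          (B (Sg.out σ)) (qop σ) := by
      intro σ; rw [← hgq σ]; exact hg2 σ
    set A : VAlg V M Sg := ⟨fun s => QCar V Sg E' X s, B, qop, hopadm⟩ with hA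
    have hSatE : ∀ e ∈ E, VSat A e := (hE' A).mpr hT
    obtain ⟨h, ⟨hadm', hhom, hunit⟩, _⟩ :=
      hfree A hSatE (fun s x => Quot.mk _ (Tm.var x)) hB.1
    have key : ∀ (s₀ : S) (t : Tm Sg.toClass (fun s => (X s).1) s₀),
        h s₀ (Quot.mk _ t) = Quot.mk _ t := by
      intro s₀ t
      induction t with
      | var x => exact hunit _ x
      | app σp ts ih =>
        obtain ⟨σ, p⟩ := σp
        show h (Sg.out σ) (Quot.mk _ (Tm.app (Sg := Sg.toClass) ⟨σ, p⟩ ts)) =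
          Quot.mk _ (Tm.app (Sg := Sg.toClass) ⟨σ, p⟩ ts)
        refine (congrArg (h _) (hq σ p ts).symm).trans ((hhom σ p _).trans (Eq.trans ?_ (hq σ p ts)))
        exact congrArg (fun f => qop σ (p, f)) (funext fun i => ih i)
    have hid : h s' = id := by
      funext q
      induction q using Quot.ind with
      | _ t => exact key s' t
    have := hadm' s'
    rwa [hid] at this
  intro s
  apply V.amnestic
  · exact V.iLift_initial _ _ _ _ _ fun i => hmin i.1 i.2 s
  · exact V.iLift_adm (fun _ => QCar V Sg E' X s)
      (fun B : {B // TCompat V M Sg E' X B} => B.1 s) (fun _ => id) ⟨ωT, hωT⟩
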